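/- Intersections of decreasing chains of subspaces commute with tensor squares: let K be a field, V a K-vector space, and (M_r)_{r ∈ ℕ} a decreasing sequence of subspaces of V (M_{r+1} ≤ M_r for all r). Then, as subspaces of V ⊗ V, ⋂_{r ∈ ℕ} (M_r ⊗ M_r) = (⋂_{r ∈ ℕ} M_r) ⊗ (⋂_{r ∈ ℕ} M_r). -/

import Mathlib

open scoped TensorProduct

open LinearMap Submodule

section aux

variable {K : Type} [Field K] {V : Type} [AddCommGroup V] [Module K V]

/-- A projection of `V` onto `Q` that maps `P` into `P ⊓ Q`. -/
lemma exists_proj_aux (P Q : Submodule K V) :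
    ∃ π : V →ₗ[K] V, (∀ v ∈ Q, π v = v) ∧ (∀ v ∈ P, π v ∈ P ⊓ Q) ∧ (∀ v, π v ∈ Q) := by
  obtain ⟨D', hD'⟩ := Submodule.exists_isCompl ((P ⊓ Q).comap P.subtype)
  set D := D'.map P.subtype with hD
  obtain ⟨E, hE⟩ := Submodule.exists_isCompl (P ⊔ Q)
  have hDP : D ≤ P := Submodule.map_subtype_le P D'
  have hmapc : ((P ⊓ Q).comap P.subtype).map P.subtype = P ⊓ Q := by
    rw [Submodule.map_comap_subtype, inf_of_le_right inf_le_left]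
  have hsup : (P ⊓ Q) ⊔ D = P := by
    have := congrArg (Submodule.map P.subtype) hD'.sup_eq_top
    rwa [Submodule.map_sup, hmapc, Submodule.map_subtype_top] at this
  have hdisj : Disjoint Q (D ⊔ E) := by
    rw [disjoint_def]
    intro q hq hq'
    obtain ⟨d, hd, e, he, hde⟩ := Submodule.mem_sup.mp hq'
    have he0 : e = 0 := by
      have : e ∈ (P ⊔ Q) ⊓ E := by
        constructor
        · have : e = q - d := by rw [← hde]; abel
          rw [this]
          exact sub_mem (Submodule.mem_sup_right hq) (Submodule.mem_sup_left (hDP hd))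
        · exact he
      have := hE.disjoint.eq_bot ▸ this
      simpa using this
    have hqd : q = d := by rw [← hde, he0, add_zero]
    have hdP : d ∈ P := hDP hd
    obtain ⟨d', hd', hdd⟩ := hd
    have hmem : d' ∈ (P ⊓ Q).comap P.subtype := by
      simp only [Submodule.mem_comap, Submodule.subtype_apply, hdd]
      exact ⟨hdP, hqd ▸ hq⟩
    have : d' ∈ D' ⊓ ((P ⊓ Q).comap P.subtype) := ⟨hd', hmem⟩
    rw [inf_comm, hD'.disjoint.eq_bot] at this
    simp only [Submodule.mem_bot] at this
    rw [hqd, ← hdd, this]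
    simp
  have hcodisj : Codisjoint Q (D ⊔ E) := by
    have h1 : Q ⊔ D = Q ⊔ P := by
      conv_rhs => rw [← hsup]
      rw [← sup_assoc, sup_eq_left.mpr (inf_le_right : P ⊓ Q ≤ Q)]
    rw [codisjoint_iff, ← sup_assoc, h1, sup_comm Q P, hE.sup_eq_top]
  have hcompl : IsCompl Q (D ⊔ E) := ⟨hdisj, hcodisj⟩
  refine ⟨Q.subtype ∘ₗ Q.projectionOnto (D ⊔ E) hcompl, ?_, ?_, ?_⟩
  · intro v hv
    rw [LinearMap.comp_apply, Submodule.projectionOnto_apply_of_mem_left hcompl hv]; rfl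
  · intro v hv
    obtain ⟨r, hr, d, hd, hrd⟩ := Submodule.mem_sup.mp (show v ∈ (P ⊓ Q) ⊔ D by rw [hsup]; exact hv)
    have : (Q.subtype ∘ₗ Q.projectionOnto (D ⊔ E) hcompl) v = r := by
      rw [← hrd]
      simp only [LinearMap.comp_apply, map_add]
      rw [Submodule.projectionOnto_apply_of_mem_right hcompl (Submodule.mem_sup_left hd),
        Submodule.projectionOnto_apply_left hcompl ⟨r, hr.2⟩]
      simp
    rw [this]; exact hr
  · intro v
    simp only [LinearMap.comp_apply, Submodule.subtype_apply]
    exact Subtype.coe_prop _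

lemma rTensor_fix_aux (P : Submodule K V) (f : V →ₗ[K] V) (hf : ∀ v ∈ P, f v = v)
    {x : V ⊗[K] V} (hx : x ∈ LinearMap.range (P.subtype.rTensor V)) : f.rTensor V x = x := by
  obtain ⟨y, rfl⟩ := hx
  induction y with
  | zero => simp
  | tmul p v => simp [LinearMap.rTensor_tmul, hf p.1 p.2]
  | add a b ha hb => simp only [map_add, ha, hb]

lemma lTensor_fix_aux (P : Submodule K V) (f : V →ₗ[K] V) (hf : ∀ v ∈ P, f v = v)
    {x : V ⊗[K] V} (hx : x ∈ LinearMap.range (P.subtype.lTensor V)) : f.lTensor V x = x := by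
  obtain ⟨y, rfl⟩ := hx
  induction y with
  | zero => simp
  | tmul v p => simp [LinearMap.lTensor_tmul, hf p.1 p.2]
  | add a b ha hb => simp only [map_add, ha, hb]

lemma rTensor_mem_aux (P S : Submodule K V) (f : V →ₗ[K] V) (hf : ∀ v ∈ P, f v ∈ S)
    {x : V ⊗[K] V} (hx : x ∈ LinearMap.range (P.subtype.rTensor V)) :
    f.rTensor V x ∈ LinearMap.range (S.subtype.rTensor V) := by
  obtain ⟨y, rfl⟩ := hx
  rw [← LinearMap.comp_apply, ← LinearMap.rTensor_comp]
  have h : f ∘ₗ P.subtype =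
      S.subtype ∘ₗ (LinearMap.codRestrict S (f ∘ₗ P.subtype) fun p => hf p p.2) :=
    (LinearMap.subtype_comp_codRestrict _ _ _).symm
  rw [h, LinearMap.rTensor_comp]
  exact ⟨_, rfl⟩

lemma lTensor_mem_aux (P S : Submodule K V) (f : V →ₗ[K] V) (hf : ∀ v ∈ P, f v ∈ S)
    {x : V ⊗[K] V} (hx : x ∈ LinearMap.range (P.subtype.lTensor V)) :
    f.lTensor V x ∈ LinearMap.range (S.subtype.lTensor V) := by
  obtain ⟨y, rfl⟩ := hx
  rw [← LinearMap.comp_apply, ← LinearMap.lTensor_comp]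
  have h : f ∘ₗ P.subtype =
      S.subtype ∘ₗ (LinearMap.codRestrict S (f ∘ₗ P.subtype) fun p => hf p p.2) :=
    (LinearMap.subtype_comp_codRestrict _ _ _).symm
  rw [h, LinearMap.lTensor_comp]
  exact ⟨_, rfl⟩

lemma mapIncl_le_rT_aux (P Q : Submodule K V) :
    LinearMap.range (TensorProduct.mapIncl P Q) ≤ LinearMap.range (P.subtype.rTensor V) := by
  rw [TensorProduct.mapIncl, ← LinearMap.rTensor_comp_lTensor]
  exact LinearMap.range_comp_le_range _ _

lemma mapIncl_le_lT_aux (P Q : Submodule K V) :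
    LinearMap.range (TensorProduct.mapIncl P Q) ≤ LinearMap.range (Q.subtype.lTensor V) := by
  rw [TensorProduct.mapIncl, ← LinearMap.lTensor_comp_rTensor]
  exact LinearMap.range_comp_le_range _ _

lemma inf_key_aux (P Q : Submodule K V) {x : V ⊗[K] V}
    (hP : x ∈ LinearMap.range (TensorProduct.mapIncl P P))
    (hQ : x ∈ LinearMap.range (TensorProduct.mapIncl Q Q)) :
    x ∈ LinearMap.range (TensorProduct.mapIncl (P ⊓ Q) (P ⊓ Q)) := by
  obtain ⟨π, hπQ, hπP, hπ⟩ := exists_proj_aux P Q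
  have hPr : x ∈ LinearMap.range (P.subtype.rTensor V) := mapIncl_le_rT_aux P P hP
  have hPl : x ∈ LinearMap.range (P.subtype.lTensor V) := mapIncl_le_lT_aux P P hP
  have hQr : x ∈ LinearMap.range (Q.subtype.rTensor V) := mapIncl_le_rT_aux Q Q hQ
  have hQl : x ∈ LinearMap.range (Q.subtype.lTensor V) := mapIncl_le_lT_aux Q Q hQ
  have h1 : x ∈ LinearMap.range ((P ⊓ Q).subtype.rTensor V) := by
    have := rTensor_mem_aux P (P ⊓ Q) π hπP hPr
    rwa [rTensor_fix_aux Q π hπQ hQr] at this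
  have h2 : x ∈ LinearMap.range ((P ⊓ Q).subtype.lTensor V) := by
    have := lTensor_mem_aux P (P ⊓ Q) π hπP hPl
    rwa [lTensor_fix_aux Q π hπQ hQl] at this
  obtain ⟨ρ, hfix, -, hmem⟩ := exists_proj_aux ⊥ (P ⊓ Q)
  have e1 : ρ.rTensor V x = x := rTensor_fix_aux _ ρ hfix h1
  have e2 : ρ.lTensor V x = x := lTensor_fix_aux _ ρ hfix h2
  have hxeq : TensorProduct.map ρ ρ x = x := by
    rw [← LinearMap.lTensor_comp_rTensor, LinearMap.comp_apply, e1, e2]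
  have hfact : TensorProduct.map ρ ρ = (TensorProduct.mapIncl (P ⊓ Q) (P ⊓ Q)) ∘ₗ
      (TensorProduct.map (LinearMap.codRestrict (P ⊓ Q) ρ hmem)
        (LinearMap.codRestrict (P ⊓ Q) ρ hmem)) := by
    rw [TensorProduct.mapIncl, ← TensorProduct.map_comp, LinearMap.subtype_comp_codRestrict]
  rw [← hxeq, hfact]
  exact ⟨_, rfl⟩

end aux

/-- Intersections of decreasing chains of subspaces commute with tensor squares: for a
decreasing sequence `(M_r)_{r ∈ ℕ}` of subspaces of a `K`-vector space `V`,
`⋂_r (M_r ⊗ M_r) = (⋂_r M_r) ⊗ (⋂_r M_r)` as subspaces of `V ⊗ V`, where `P ⊗ Q` denotes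
the range of the canonical map `P ⊗ Q → V ⊗ V`. -/
theorem iInf_tensor_square_of_antitone (K : Type) [Field K]
    (V : Type) [AddCommGroup V] [Module K V]
    (M : ℕ → Submodule K V) (hM : ∀ r, M (r + 1) ≤ M r) :
    (⨅ r : ℕ, LinearMap.range (TensorProduct.mapIncl (M r) (M r))) =
      LinearMap.range (TensorProduct.mapIncl (⨅ r : ℕ, M r) (⨅ r : ℕ, M r)) := by
  refine le_antisymm ?_ (le_iInf fun r =>
    TensorProduct.range_mapIncl_mono (iInf_le M r) (iInf_le M r))
  intro x hx
  rw [Submodule.mem_iInf] at hx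
  obtain ⟨M', N', hM', hN', hsub⟩ :=
    TensorProduct.exists_finite_submodule_of_setFinite {x} (Set.finite_singleton x)
  set F := M' ⊔ N' with hF
  haveI : Module.Finite K F := by
    rw [Module.Finite.iff_fg] at hM' hN' ⊢
    exact hM'.sup hN'
  have hxF : x ∈ LinearMap.range (TensorProduct.mapIncl F F) :=
    TensorProduct.range_mapIncl_mono le_sup_left le_sup_right (hsub rfl)
  have hanti : Antitone M := antitone_nat_of_succ_le hM
  have inst : ∀ r, FiniteDimensional K ↥(F ⊓ M r) := fun r =>
    Submodule.finiteDimensional_of_le inf_le_left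
  set f : ℕ → ℕ := fun r => Module.finrank K ↥(F ⊓ M r) with hf
  obtain ⟨N, hN⟩ : ∃ N, f N = sInf (Set.range f) := Nat.sInf_mem (Set.range_nonempty f)
  have hstab : ∀ r, N ≤ r → F ⊓ M r = F ⊓ M N := fun r hr => by
    haveI := inst N
    refine Submodule.eq_of_le_of_finrank_le (inf_le_inf_left F (hanti hr)) ?_
    show f N ≤ f r
    exact hN ▸ Nat.sInf_le ⟨r, rfl⟩
  have hWle : F ⊓ M N ≤ ⨅ r, M r := le_iInf fun r => by
    rcases le_total N r with h | h
    · exact le_trans (hstab r h).ge inf_le_right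
    · exact inf_le_right.trans (hanti h)
  exact TensorProduct.range_mapIncl_mono hWle hWle (inf_key_aux F (M N) hxF (hx N))
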